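/- Let k ≥ 1 and t ≥ 1, let 0 ≤ r ≤ kt, and let a_0, a_1, …, a_t be elements of a commutative ring with unity. Then det( x·I_{|G_{r,t}^{[k]}|} − Π_{r,t}^{[k]}(a_0, a_1, …, a_t) ) = det( x·I_{|G_{kt−r,t}^{[k]}|} − Π_{kt−r,t}^{[k]}(a_t, a_{t−1}, …, a_0) ), as polynomials in x. -/

import Mathlib

open scoped BigOperators Classical

/-- The index set `G_{r,t}^{[k]}`: vectors `(l_1, …, l_t)` with `0 ≤ l_i ≤ k` and
`l_1 + ⋯ + l_t = r`. -/
def GIdx (k r t : ℕ) := {l : Fin t → Fin (k + 1) // (∑ i, (l i : ℕ)) = r}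

noncomputable instance (k r t : ℕ) : Fintype (GIdx k r t) := by
  unfold GIdx; infer_instance

instance (k r t : ℕ) : DecidableEq (GIdx k r t) := by
  unfold GIdx; infer_instance

/-- The square matrix `Π_{r,t}^{[k]}(a_0, a_1, …, a_t)`, with rows and columns indexed by
`G_{r,t}^{[k]}`.  For `t ≥ 1` the `(α,β)` entry, for `α = (l_1, …, l_t)`, equals
`k!·C(k, l_t+p_1+⋯+p_{t−1})·C(l_1,p_1)⋯C(l_{t−1},p_{t−1})·a_0^{k−l_t−Σp}·a_1^{p_1}⋯a_{t−1}^{p_{t−1}}·a_t^{l_t}`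
if `β = (l_t+p_1+⋯+p_{t−1}, l_1−p_1, …, l_{t−1}−p_{t−1})` for (necessarily unique) integers
`0 ≤ p_i ≤ l_i` with `p_1+⋯+p_{t−1} ≤ k−l_t`, and `0` otherwise; `Π_{0,0}^{[k]}(a_0) = k!·a_0^k`. -/
noncomputable def PiMat {R : Type*} [CommRing R] (k t r : ℕ) (a : ℕ → R) :
    Matrix (GIdx k r t) (GIdx k r t) R :=
  Matrix.of fun α β =>
    if ht : 0 < t then
      ∑ p : Fin t → Fin (k + 1),
        if (∀ i : Fin t, i.val + 1 < t → (p i : ℕ) ≤ (α.1 i : ℕ)) ∧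
            (∀ i : Fin t, ¬ i.val + 1 < t → (p i : ℕ) = 0) ∧
            (α.1 ⟨t - 1, Nat.sub_lt ht one_pos⟩ : ℕ) + (∑ i, (p i : ℕ)) ≤ k ∧
            (β.1 ⟨0, ht⟩ : ℕ) = (α.1 ⟨t - 1, Nat.sub_lt ht one_pos⟩ : ℕ) + ∑ i, (p i : ℕ) ∧
            (∀ j : Fin t, 0 < j.val →
              (β.1 j : ℕ) =
                (α.1 ⟨j.val - 1, lt_of_le_of_lt (Nat.pred_le _) j.isLt⟩ : ℕ) -
                  (p ⟨j.val - 1, lt_of_le_of_lt (Nat.pred_le _) j.isLt⟩ : ℕ)) then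
          (Nat.factorial k : R) *
            (Nat.choose k ((α.1 ⟨t - 1, Nat.sub_lt ht one_pos⟩ : ℕ) + ∑ i, (p i : ℕ)) : R) *
            (∏ i : Fin t, if i.val + 1 < t then (Nat.choose (α.1 i : ℕ) (p i : ℕ) : R) else 1) *
            a 0 ^ (k - (α.1 ⟨t - 1, Nat.sub_lt ht one_pos⟩ : ℕ) - ∑ i, (p i : ℕ)) *
            (∏ i : Fin t, if i.val + 1 < t then a (i.val + 1) ^ (p i : ℕ) else 1) *
            a t ^ (α.1 ⟨t - 1, Nat.sub_lt ht one_pos⟩ : ℕ)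
        else 0
    else (Nat.factorial k : R) * a 0 ^ k

/-! ### Auxiliary definitions -/


/-- The condition occurring in `PiMat`, abstracted over the row `l`, column `b`
and summation index `p`. -/
def PCond (k t : ℕ) (ht : 0 < t) (l b p : Fin t → Fin (k + 1)) : Prop :=
  (∀ i : Fin t, i.val + 1 < t → (p i : ℕ) ≤ (l i : ℕ)) ∧
    (∀ i : Fin t, ¬ i.val + 1 < t → (p i : ℕ) = 0) ∧
    (l ⟨t - 1, Nat.sub_lt ht one_pos⟩ : ℕ) + (∑ i, (p i : ℕ)) ≤ k ∧
    (b ⟨0, ht⟩ : ℕ) = (l ⟨t - 1, Nat.sub_lt ht one_pos⟩ : ℕ) + ∑ i, (p i : ℕ) ∧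
    (∀ j : Fin t, 0 < j.val →
      (b j : ℕ) =
        (l ⟨j.val - 1, lt_of_le_of_lt (Nat.pred_le _) j.isLt⟩ : ℕ) -
          (p ⟨j.val - 1, lt_of_le_of_lt (Nat.pred_le _) j.isLt⟩ : ℕ))

/-- The value occurring in `PiMat`. -/
noncomputable def PVal {R : Type*} [CommRing R] (k t : ℕ) (ht : 0 < t) (a : ℕ → R)
    (l p : Fin t → Fin (k + 1)) : R :=
  (Nat.factorial k : R) *
    (Nat.choose k ((l ⟨t - 1, Nat.sub_lt ht one_pos⟩ : ℕ) + ∑ i, (p i : ℕ)) : R) *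
    (∏ i : Fin t, if i.val + 1 < t then (Nat.choose (l i : ℕ) (p i : ℕ) : R) else 1) *
    a 0 ^ (k - (l ⟨t - 1, Nat.sub_lt ht one_pos⟩ : ℕ) - ∑ i, (p i : ℕ)) *
    (∏ i : Fin t, if i.val + 1 < t then a (i.val + 1) ^ (p i : ℕ) else 1) *
    a t ^ (l ⟨t - 1, Nat.sub_lt ht one_pos⟩ : ℕ)

lemma PiMat_apply {R : Type*} [CommRing R] {k t r : ℕ} (ht : 0 < t) (a : ℕ → R)
    (α β : GIdx k r t) :
    PiMat k t r a α β =
      ∑ p : Fin t → Fin (k + 1),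
        if PCond k t ht α.1 β.1 p then PVal k t ht a α.1 p else 0 := by
  simp only [PiMat, Matrix.of_apply, dif_pos ht]
  refine Finset.sum_congr rfl fun p _ => ?_
  unfold PCond PVal
  congr 1

/-! ### Index combinatorics -/

def sigmaFun (t : ℕ) (i : Fin t) : Fin t :=
  if h : i.val + 1 < t then ⟨t - 2 - i.val, by omega⟩ else i

lemma sigmaFun_invol (t : ℕ) : Function.Involutive (sigmaFun t) := by
  intro i
  unfold sigmaFun
  by_cases h : i.val + 1 < t
  · rw [dif_pos h]
    have h2 : (t : ℕ) - 2 - i.val + 1 < t := by omega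
    rw [dif_pos h2]
    exact Fin.ext (by simp; omega)
  · rw [dif_neg h, dif_neg h]

def sigmaPerm (t : ℕ) : Equiv.Perm (Fin t) := (sigmaFun_invol t).toPerm

@[simp] lemma sigmaPerm_apply (t : ℕ) (i : Fin t) : sigmaPerm t i = sigmaFun t i := rfl

def revFin (t : ℕ) (i : Fin t) : Fin t := ⟨t - 1 - i.val, by have := i.isLt; omega⟩

lemma revFin_invol (t : ℕ) : Function.Involutive (revFin t) := by
  intro i; have := i.isLt; exact Fin.ext (by simp [revFin]; omega)

def revPerm (t : ℕ) : Equiv.Perm (Fin t) := (revFin_invol t).toPerm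

@[simp] lemma revPerm_apply (t : ℕ) (i : Fin t) : revPerm t i = revFin t i := rfl

def phiFun (k : ℕ) {t : ℕ} (b : Fin t → Fin (k + 1)) : Fin t → Fin (k + 1) :=
  fun i => ⟨k - (b (revFin t i) : ℕ), by omega⟩

lemma phiFun_coe (k : ℕ) {t : ℕ} (b : Fin t → Fin (k + 1)) (i : Fin t) :
    (phiFun k b i : ℕ) = k - (b (revFin t i) : ℕ) := rfl

lemma phiFun_invol (k : ℕ) {t : ℕ} (b : Fin t → Fin (k + 1)) :
    phiFun k (phiFun k b) = b := by
  funext i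
  refine Fin.ext ?_
  have hb : (b i : ℕ) ≤ k := by have := (b i).isLt; omega
  simp [phiFun_coe, revFin_invol t i]
  omega

lemma sum_phiFun (k : ℕ) {t : ℕ} (b : Fin t → Fin (k + 1)) :
    (∑ i, (phiFun k b i : ℕ)) = k * t - ∑ i, (b i : ℕ) := by
  have h1 : (∑ i, (phiFun k b i : ℕ)) = ∑ i, (k - (b i : ℕ)) := by
    exact Fintype.sum_equiv (revPerm t) _ (fun i => k - (b i : ℕ)) (fun i => rfl)
  have h2 : (∑ i, (k - (b i : ℕ))) + ∑ i, (b i : ℕ) = k * t := by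
    rw [← Finset.sum_add_distrib]
    have : ∀ i : Fin t, (k - (b i : ℕ)) + (b i : ℕ) = k := fun i => by
      have := (b i).isLt; omega
    simp only [this, Finset.sum_const, Finset.card_univ, Fintype.card_fin, smul_eq_mul, mul_comm]
  omega

lemma sum_le_card_mul {t k : ℕ} (b : Fin t → Fin (k + 1)) : (∑ i, (b i : ℕ)) ≤ k * t := by
  calc (∑ i, (b i : ℕ)) ≤ ∑ _i : Fin t, k :=
        Finset.sum_le_sum fun i _ => by have := (b i).isLt; omega
    _ = k * t := by simp [mul_comm]

def gEquiv {k r t : ℕ} (hr : r ≤ k * t) : GIdx k r t ≃ GIdx k (k * t - r) t where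
  toFun γ := ⟨phiFun k γ.1, by rw [sum_phiFun, γ.2]⟩
  invFun γ := ⟨phiFun k γ.1, by rw [sum_phiFun, γ.2]; omega⟩
  left_inv γ := Subtype.ext (phiFun_invol k γ.1)
  right_inv γ := Subtype.ext (phiFun_invol k γ.1)

lemma gEquiv_coe {k r t : ℕ} (hr : r ≤ k * t) (γ : GIdx k r t) :
    (gEquiv hr γ).1 = phiFun k γ.1 := rfl

/-! ### The condition is preserved by the reversal/complement -/

lemma pcond_rev {k t : ℕ} (ht : 0 < t) (l b p : Fin t → Fin (k + 1))
    (h : PCond k t ht l b p) :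
    PCond k t ht (phiFun k b) (phiFun k l) (p ∘ sigmaFun t) := by
  obtain ⟨h1, h2, h3, h4, h5⟩ := h
  have hlk : ∀ i, (l i : ℕ) ≤ k := fun i => by have := (l i).isLt; omega
  have H5 : ∀ (j u : Fin t), j.val = u.val + 1 → (b j : ℕ) = (l u : ℕ) - (p u : ℕ) := by
    intro j u hju
    have h' := h5 j (by omega)
    have hu : (⟨j.val - 1, lt_of_le_of_lt (Nat.pred_le _) j.isLt⟩ : Fin t) = u :=
      Fin.ext (by simp only []; omega)
    rw [hu] at h'
    exact h'
  have hsum : (∑ i, ((p ∘ sigmaFun t) i : ℕ)) = ∑ i, (p i : ℕ) :=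
    Fintype.sum_equiv (sigmaPerm t) _ _ (fun i => rfl)
  have hrl : revFin t ⟨t - 1, Nat.sub_lt ht one_pos⟩ = ⟨0, ht⟩ :=
    Fin.ext (by simp only [revFin]; omega)
  have hr0 : revFin t ⟨0, ht⟩ = ⟨t - 1, Nat.sub_lt ht one_pos⟩ :=
    Fin.ext (by simp only [revFin]; omega)
  have hb0 : (phiFun k b ⟨t - 1, Nat.sub_lt ht one_pos⟩ : ℕ) = k - (b ⟨0, ht⟩ : ℕ) := by
    rw [phiFun_coe, hrl]
  have hl0 : (phiFun k l ⟨0, ht⟩ : ℕ) = k - (l ⟨t - 1, Nat.sub_lt ht one_pos⟩ : ℕ) := by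
    rw [phiFun_coe, hr0]
  refine ⟨?_, ?_, ?_, ?_, ?_⟩
  · intro i hi
    have hσ : sigmaFun t i = ⟨t - 2 - i.val, by omega⟩ := dif_pos hi
    have hbv : (b (revFin t i) : ℕ)
        = (l ⟨t - 2 - i.val, by omega⟩ : ℕ) - (p ⟨t - 2 - i.val, by omega⟩ : ℕ) :=
      H5 _ _ (by simp [revFin]; omega)
    have hple := h1 ⟨t - 2 - i.val, by omega⟩ (by simp only []; omega)
    have hlle := hlk ⟨t - 2 - i.val, by omega⟩
    simp only [Function.comp_apply, hσ, phiFun_coe, hbv]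
    omega
  · intro i hi
    have hσ : sigmaFun t i = i := dif_neg hi
    simp only [Function.comp_apply, hσ]
    exact h2 i hi
  · rw [hb0, hsum]; omega
  · rw [hb0, hl0, hsum]; omega
  · intro j hj
    have hjt := j.isLt
    have hσ : sigmaFun t ⟨j.val - 1, lt_of_le_of_lt (Nat.pred_le _) j.isLt⟩
        = ⟨t - 1 - j.val, by omega⟩ := by
      rw [sigmaFun, dif_pos (by simp only []; omega)]
      exact Fin.ext (by simp only []; omega)
    have hbv : (b ⟨t - j.val, by omega⟩ : ℕ)
        = (l ⟨t - 1 - j.val, by omega⟩ : ℕ) - (p ⟨t - 1 - j.val, by omega⟩ : ℕ) :=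
      H5 _ _ (by simp only []; omega)
    have hrev1 : revFin t j = ⟨t - 1 - j.val, by omega⟩ := rfl
    have hrev2 : revFin t ⟨j.val - 1, lt_of_le_of_lt (Nat.pred_le _) j.isLt⟩
        = ⟨t - j.val, by omega⟩ := Fin.ext (by simp [revFin]; omega)
    have hple := h1 ⟨t - 1 - j.val, by omega⟩ (by simp only []; omega)
    have hlle := hlk ⟨t - 1 - j.val, by omega⟩
    simp only [Function.comp_apply, hσ, phiFun_coe, hrev1, hrev2, hbv]
    omega

lemma comp_sigma_sigma {k t : ℕ} (p : Fin t → Fin (k + 1)) :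
    (p ∘ sigmaFun t) ∘ sigmaFun t = p := by
  funext i; simp [Function.comp, sigmaFun_invol t i]

lemma pcond_rev_iff {k t : ℕ} (ht : 0 < t) (l b p : Fin t → Fin (k + 1)) :
    PCond k t ht l b p ↔ PCond k t ht (phiFun k b) (phiFun k l) (p ∘ sigmaFun t) := by
  constructor
  · exact pcond_rev ht l b p
  · intro h
    have h2 := pcond_rev ht _ _ _ h
    rwa [phiFun_invol, phiFun_invol, comp_sigma_sigma] at h2

/-! ### Numeric infrastructure -/

def fvalN (k : ℕ) {t : ℕ} (γ : Fin t → Fin (k + 1)) : ℕ :=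
  ∏ i, Nat.factorial (γ i : ℕ) * Nat.factorial (k - (γ i : ℕ))

def rhoPerm (t : ℕ) (ht : 0 < t) : Equiv.Perm (Fin t) where
  toFun j := if h : j.val + 1 < t then ⟨j.val + 1, h⟩ else ⟨0, ht⟩
  invFun j := if h : 0 < j.val then ⟨j.val - 1, by have := j.isLt; omega⟩
    else ⟨t - 1, by omega⟩
  left_inv j := by
    dsimp only
    have hj := j.isLt
    by_cases h : j.val + 1 < t
    · rw [dif_pos h, dif_pos (by simp only []; omega)]
      exact Fin.ext (by simp only []; omega)
    · rw [dif_neg h, dif_neg (by simp only []; omega)]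
      exact Fin.ext (by simp only []; omega)
  right_inv j := by
    dsimp only
    have hj := j.isLt
    by_cases h : 0 < j.val
    · rw [dif_pos h, dif_pos (by simp only []; omega)]
      exact Fin.ext (by simp only []; omega)
    · rw [dif_neg h, dif_neg (by simp only []; omega)]
      exact Fin.ext (by simp only []; omega)

lemma prod_ite_last {M : Type*} [CommMonoid M] {t : ℕ} (ht : 0 < t) (f : Fin t → M) (c : M) :
    (∏ j : Fin t, if j.val + 1 < t then f j else c)
      = c * ∏ j : Fin t, (if j.val + 1 < t then f j else 1) := by
  have hsplit : ∀ j : Fin t, (if j.val + 1 < t then f j else c)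
      = (if j.val + 1 < t then (1 : M) else c) * (if j.val + 1 < t then f j else 1) := by
    intro j; by_cases h : j.val + 1 < t <;> simp [h]
  rw [Finset.prod_congr rfl fun j _ => hsplit j, Finset.prod_mul_distrib]
  congr 1
  rw [Finset.prod_eq_single_of_mem (⟨t - 1, Nat.sub_lt ht one_pos⟩ : Fin t)
      (Finset.mem_univ _)]
  · rw [if_neg (by simp only []; omega)]
  · intro j _ hne
    rw [if_pos]
    have : j.val ≠ t - 1 := fun hv => hne (Fin.ext hv)
    have := j.isLt
    omega

/-! ### The numeric identity -/

lemma mul_shuffle (A B C D K : ℕ) (h : A * B = C * D) : A * (K * B) = K * C * D := by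
  calc A * (K * B) = K * (A * B) := by ring
    _ = K * (C * D) := by rw [h]
    _ = K * C * D := by ring

lemma numer_rev {k t : ℕ} (ht : 0 < t) (l b p : Fin t → Fin (k + 1))
    (h : PCond k t ht l b p) :
    fvalN k l *
        (Nat.factorial k *
            Nat.choose k (k - (l ⟨t - 1, Nat.sub_lt ht one_pos⟩ : ℕ)) *
          ∏ i : Fin t,
            (if i.val + 1 < t
              then Nat.choose (phiFun k b i : ℕ) ((p ∘ sigmaFun t) i : ℕ) else 1))
      = (Nat.factorial k *
            Nat.choose k ((l ⟨t - 1, Nat.sub_lt ht one_pos⟩ : ℕ) + ∑ i, (p i : ℕ)) *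
          ∏ i : Fin t, (if i.val + 1 < t then Nat.choose (l i : ℕ) (p i : ℕ) else 1)) *
        fvalN k b := by
  obtain ⟨h1, h2, h3, h4, h5⟩ := h
  set L := (l ⟨t - 1, Nat.sub_lt ht one_pos⟩ : ℕ) with hL
  set S := ∑ i, (p i : ℕ) with hS
  have hlk : ∀ i, (l i : ℕ) ≤ k := fun i => by have := (l i).isLt; omega
  have H5 : ∀ (j u : Fin t), j.val = u.val + 1 → (b j : ℕ) = (l u : ℕ) - (p u : ℕ) := by
    intro j u hju
    have h' := h5 j (by omega)
    have hu : (⟨j.val - 1, lt_of_le_of_lt (Nat.pred_le _) j.isLt⟩ : Fin t) = u :=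
      Fin.ext (by simp only []; omega)
    rw [hu] at h'
    exact h'
  have hsum : (∑ i, ((p ∘ sigmaFun t) i : ℕ)) = S :=
    Fintype.sum_equiv (sigmaPerm t) _ _ fun i => rfl
  have hrl : revFin t ⟨t - 1, Nat.sub_lt ht one_pos⟩ = ⟨0, ht⟩ :=
    Fin.ext (by simp only [revFin]; omega)
  have hb0 : (phiFun k b ⟨t - 1, Nat.sub_lt ht one_pos⟩ : ℕ) = k - (L + S) := by
    rw [phiFun_coe, hrl, h4]
  have harg : (phiFun k b ⟨t - 1, Nat.sub_lt ht one_pos⟩ : ℕ) +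
      ∑ i, ((p ∘ sigmaFun t) i : ℕ) = k - L := by
    rw [hb0, hsum]; omega
  have hB : ∀ j : Fin t,
      (if j.val + 1 < t then Nat.choose (k - ((l j : ℕ) - (p j : ℕ))) (p j : ℕ) else 1)
        = (if (sigmaFun t j).val + 1 < t
            then Nat.choose (phiFun k b (sigmaFun t j) : ℕ)
              ((p ∘ sigmaFun t) (sigmaFun t j) : ℕ)
            else 1) := by
    intro j
    have hjt := j.isLt
    by_cases hj : j.val + 1 < t
    · have hσ : sigmaFun t j = ⟨t - 2 - j.val, by omega⟩ := dif_pos hj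
      have hσσ : sigmaFun t (sigmaFun t j) = j := sigmaFun_invol t j
      have hcond : (sigmaFun t j).val + 1 < t := by rw [hσ]; simp only []; omega
      have hrev : revFin t (sigmaFun t j) = ⟨j.val + 1, hj⟩ := by
        rw [hσ]; exact Fin.ext (by simp only [revFin]; omega)
      have hbv : (b ⟨j.val + 1, hj⟩ : ℕ) = (l j : ℕ) - (p j : ℕ) := H5 _ _ rfl
      rw [if_pos hj, if_pos hcond, Function.comp_apply, hσσ, phiFun_coe, hrev, hbv]
    · have hσ : sigmaFun t j = j := dif_neg hj
      rw [if_neg hj, hσ, if_neg hj]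
  have hBprod :
      (∏ i : Fin t,
          (if i.val + 1 < t
            then Nat.choose (phiFun k b i : ℕ) ((p ∘ sigmaFun t) i : ℕ) else 1))
        = ∏ j : Fin t,
            (if j.val + 1 < t then Nat.choose (k - ((l j : ℕ) - (p j : ℕ))) (p j : ℕ)
              else 1) :=
    (Fintype.prod_equiv (sigmaPerm t) _ _ hB).symm
  have hfb : fvalN k b = ∏ j : Fin t,
      (Nat.factorial (b (rhoPerm t ht j) : ℕ) *
        Nat.factorial (k - (b (rhoPerm t ht j) : ℕ))) :=
    (Fintype.prod_equiv (rhoPerm t ht) _ _ fun j => rfl).symm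
  have hfactor : ∀ j : Fin t,
      (Nat.factorial (l j : ℕ) * Nat.factorial (k - (l j : ℕ))) *
          (if j.val + 1 < t then Nat.choose (k - ((l j : ℕ) - (p j : ℕ))) (p j : ℕ)
            else Nat.choose k (k - L))
        = (if j.val + 1 < t then Nat.choose (l j : ℕ) (p j : ℕ) else Nat.choose k (L + S)) *
          (Nat.factorial (b (rhoPerm t ht j) : ℕ) *
            Nat.factorial (k - (b (rhoPerm t ht j) : ℕ))) := by
    intro j
    have hjt := j.isLt
    by_cases hj : j.val + 1 < t
    · have hρ : rhoPerm t ht j = (⟨j.val + 1, hj⟩ : Fin t) := by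
        unfold rhoPerm; simp only [Equiv.coe_fn_mk]; exact dif_pos hj
      have hbv : (b ⟨j.val + 1, hj⟩ : ℕ) = (l j : ℕ) - (p j : ℕ) := H5 _ _ rfl
      have hple : (p j : ℕ) ≤ (l j : ℕ) := h1 j hj
      have hlle := hlk j
      rw [if_pos hj, if_pos hj, hρ, hbv]
      set Lj := (l j : ℕ) with hLj
      set Pj := (p j : ℕ) with hPj
      refine Nat.eq_of_mul_eq_mul_right (Nat.factorial_pos Pj) ?_
      have e1 : Nat.choose (k - (Lj - Pj)) Pj * Pj.factorial * (k - Lj).factorial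
          = (k - (Lj - Pj)).factorial := by
        have e := Nat.choose_mul_factorial_mul_factorial
          (show Pj ≤ k - (Lj - Pj) by omega)
        rwa [show k - (Lj - Pj) - Pj = k - Lj by omega] at e
      have e2 : Nat.choose Lj Pj * Pj.factorial * (Lj - Pj).factorial = Lj.factorial :=
        Nat.choose_mul_factorial_mul_factorial hple
      calc Lj.factorial * (k - Lj).factorial * Nat.choose (k - (Lj - Pj)) Pj * Pj.factorial
          = Lj.factorial *
              (Nat.choose (k - (Lj - Pj)) Pj * Pj.factorial * (k - Lj).factorial) := by ring
        _ = Lj.factorial * (k - (Lj - Pj)).factorial := by rw [e1]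
        _ = (Nat.choose Lj Pj * Pj.factorial * (Lj - Pj).factorial) *
              (k - (Lj - Pj)).factorial := by rw [e2]
        _ = Nat.choose Lj Pj *
              ((Lj - Pj).factorial * (k - (Lj - Pj)).factorial) * Pj.factorial := by ring
    · have hρ : rhoPerm t ht j = (⟨0, ht⟩ : Fin t) := by
        unfold rhoPerm; simp only [Equiv.coe_fn_mk]; exact dif_neg hj
      have hjl : j = ⟨t - 1, Nat.sub_lt ht one_pos⟩ := Fin.ext (by simp only []; omega)
      have hLle : L ≤ k := hlk _
      rw [if_neg hj, if_neg hj, hρ, h4, hjl, ← hL]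
      have e3 : Nat.choose k (L + S) * (L + S).factorial * (k - (L + S)).factorial
          = k.factorial := Nat.choose_mul_factorial_mul_factorial h3
      have e4 : Nat.choose k L * L.factorial * (k - L).factorial = k.factorial :=
        Nat.choose_mul_factorial_mul_factorial hLle
      have e5 : Nat.choose k (k - L) = Nat.choose k L := Nat.choose_symm hLle
      calc L.factorial * (k - L).factorial * Nat.choose k (k - L)
          = Nat.choose k L * L.factorial * (k - L).factorial := by rw [e5]; ring
        _ = k.factorial := e4
        _ = Nat.choose k (L + S) * (L + S).factorial * (k - (L + S)).factorial := e3.symm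
        _ = Nat.choose k (L + S) *
              ((L + S).factorial * (k - (L + S)).factorial) := by ring
  have key : (∏ j : Fin t, (Nat.factorial (l j : ℕ) * Nat.factorial (k - (l j : ℕ)))) *
      (∏ j : Fin t,
        (if j.val + 1 < t then Nat.choose (k - ((l j : ℕ) - (p j : ℕ))) (p j : ℕ)
          else Nat.choose k (k - L)))
      = (∏ j : Fin t,
          (if j.val + 1 < t then Nat.choose (l j : ℕ) (p j : ℕ) else Nat.choose k (L + S))) *
        (∏ j : Fin t,
          (Nat.factorial (b (rhoPerm t ht j) : ℕ) *
            Nat.factorial (k - (b (rhoPerm t ht j) : ℕ)))) := by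
    rw [← Finset.prod_mul_distrib, ← Finset.prod_mul_distrib]
    exact Finset.prod_congr rfl fun j _ => hfactor j
  have hp1 := prod_ite_last ht
    (fun j : Fin t => Nat.choose (k - ((l j : ℕ) - (p j : ℕ))) (p j : ℕ))
    (Nat.choose k (k - L))
  have hp2 := prod_ite_last ht
    (fun j : Fin t => Nat.choose (l j : ℕ) (p j : ℕ)) (Nat.choose k (L + S))
  rw [hBprod]
  rw [mul_assoc k.factorial, ← hp1, mul_assoc k.factorial, ← hp2, hfb]
  exact mul_shuffle _ _ _ _ _ key

/-! ### The value identity -/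

lemma pval_rev {R : Type*} [CommRing R] {k t : ℕ} (ht : 0 < t) (a : ℕ → R)
    (l b p : Fin t → Fin (k + 1)) (h : PCond k t ht l b p) :
    (fvalN k l : R) * PVal k t ht (fun i => a (t - i)) (phiFun k b) (p ∘ sigmaFun t)
      = PVal k t ht a l p * (fvalN k b : R) := by
  have hnum := numer_rev ht l b p h
  obtain ⟨h1, h2, h3, h4, h5⟩ := h
  have hlk : ∀ i, (l i : ℕ) ≤ k := fun i => by have := (l i).isLt; omega
  have hsum : (∑ i, ((p ∘ sigmaFun t) i : ℕ)) = ∑ i, (p i : ℕ) :=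
    Fintype.sum_equiv (sigmaPerm t) _ _ fun i => rfl
  have hrl : revFin t ⟨t - 1, Nat.sub_lt ht one_pos⟩ = ⟨0, ht⟩ :=
    Fin.ext (by simp only [revFin]; omega)
  have hb0 : (phiFun k b ⟨t - 1, Nat.sub_lt ht one_pos⟩ : ℕ)
      = k - ((l ⟨t - 1, Nat.sub_lt ht one_pos⟩ : ℕ) + ∑ i, (p i : ℕ)) := by
    rw [phiFun_coe, hrl, h4]
  have harg : (phiFun k b ⟨t - 1, Nat.sub_lt ht one_pos⟩ : ℕ) +
      ∑ i, ((p ∘ sigmaFun t) i : ℕ) = k - (l ⟨t - 1, Nat.sub_lt ht one_pos⟩ : ℕ) := by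
    rw [hb0, hsum]; omega
  have hexp1 : k - (phiFun k b ⟨t - 1, Nat.sub_lt ht one_pos⟩ : ℕ) -
      (∑ i, ((p ∘ sigmaFun t) i : ℕ)) = (l ⟨t - 1, Nat.sub_lt ht one_pos⟩ : ℕ) := by
    rw [hb0, hsum]; omega
  have hexp2 : (phiFun k b ⟨t - 1, Nat.sub_lt ht one_pos⟩ : ℕ)
      = k - (l ⟨t - 1, Nat.sub_lt ht one_pos⟩ : ℕ) - ∑ i, (p i : ℕ) := by
    rw [hb0]; omega
  have hA : ∀ j : Fin t, (if j.val + 1 < t then a (j.val + 1) ^ (p j : ℕ) else 1)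
      = (if (sigmaFun t j).val + 1 < t
          then a (t - ((sigmaFun t j).val + 1)) ^ ((p ∘ sigmaFun t) (sigmaFun t j) : ℕ)
          else 1) := by
    intro j
    have hjt := j.isLt
    by_cases hj : j.val + 1 < t
    · have hσ : sigmaFun t j = ⟨t - 2 - j.val, by omega⟩ := dif_pos hj
      have hσσ : sigmaFun t (sigmaFun t j) = j := sigmaFun_invol t j
      have hcond : (sigmaFun t j).val + 1 < t := by rw [hσ]; simp only []; omega
      rw [if_pos hj, if_pos hcond, Function.comp_apply, hσσ, hσ]
      have harg2 : t - ((⟨t - 2 - j.val, by omega⟩ : Fin t).val + 1) = j.val + 1 := by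
        simp only []; omega
      rw [harg2]
    · have hσ : sigmaFun t j = j := dif_neg hj
      rw [if_neg hj, hσ, if_neg hj]
  have hprodA : (∏ i : Fin t,
        if i.val + 1 < t then a (t - (i.val + 1)) ^ ((p ∘ sigmaFun t) i : ℕ) else 1)
      = ∏ i : Fin t, if i.val + 1 < t then a (i.val + 1) ^ (p i : ℕ) else 1 :=
    (Fintype.prod_equiv (sigmaPerm t) _ _ hA).symm
  have castprod : ∀ f : Fin t → ℕ,
      (∏ i : Fin t, if i.val + 1 < t then (f i : R) else 1)
        = ((∏ i : Fin t, if i.val + 1 < t then f i else 1 : ℕ) : R) := by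
    intro f
    rw [Nat.cast_prod]
    exact Finset.prod_congr rfl fun i _ => by by_cases hc : i.val + 1 < t <;> simp [hc]
  simp only [PVal, Nat.sub_zero, Nat.sub_self]
  rw [harg, hexp1, hexp2, hprodA,
    castprod (fun i => Nat.choose (phiFun k b i : ℕ) ((p ∘ sigmaFun t) i : ℕ)),
    castprod (fun i => Nat.choose (l i : ℕ) (p i : ℕ))]
  have hnumR : (fvalN k l : R) *
      ((Nat.factorial k : R) *
          (Nat.choose k (k - (l ⟨t - 1, Nat.sub_lt ht one_pos⟩ : ℕ)) : R) *
        ((∏ i : Fin t,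
            if i.val + 1 < t
              then Nat.choose (phiFun k b i : ℕ) ((p ∘ sigmaFun t) i : ℕ) else 1 : ℕ) : R))
      = ((Nat.factorial k : R) *
            (Nat.choose k ((l ⟨t - 1, Nat.sub_lt ht one_pos⟩ : ℕ) + ∑ i, (p i : ℕ)) : R) *
          ((∏ i : Fin t,
              if i.val + 1 < t then Nat.choose (l i : ℕ) (p i : ℕ) else 1 : ℕ) : R)) *
        (fvalN k b : R) := by
    exact_mod_cast congrArg (Nat.cast : ℕ → R) hnum
  linear_combination (a 0 ^ (k - (l ⟨t - 1, Nat.sub_lt ht one_pos⟩ : ℕ) - ∑ i, (p i : ℕ)) *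
    (∏ i : Fin t, if i.val + 1 < t then a (i.val + 1) ^ (p i : ℕ) else 1) *
    a t ^ (l ⟨t - 1, Nat.sub_lt ht one_pos⟩ : ℕ)) * hnumR

/-! ### Matrix-level lemmas -/

def compSigmaEquiv (k t : ℕ) : (Fin t → Fin (k + 1)) ≃ (Fin t → Fin (k + 1)) where
  toFun p := p ∘ sigmaFun t
  invFun p := p ∘ sigmaFun t
  left_inv p := comp_sigma_sigma p
  right_inv p := comp_sigma_sigma p

lemma key_entry {R : Type*} [CommRing R] {k t r : ℕ} (ht : 0 < t) (hr : r ≤ k * t)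
    (a : ℕ → R) (α β : GIdx k r t) :
    (fvalN k α.1 : R) *
        PiMat k t (k * t - r) (fun i => a (t - i)) (gEquiv hr β) (gEquiv hr α)
      = PiMat k t r a α β * (fvalN k β.1 : R) := by
  rw [PiMat_apply ht, PiMat_apply ht]
  simp only [gEquiv_coe]
  rw [Finset.mul_sum, Finset.sum_mul]
  refine Eq.symm (Fintype.sum_equiv (compSigmaEquiv k t)
    (fun p => (if PCond k t ht α.1 β.1 p then PVal k t ht a α.1 p else 0) * (fvalN k β.1 : R))
    (fun q => (fvalN k α.1 : R) *
      (if PCond k t ht (phiFun k β.1) (phiFun k α.1) q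
        then PVal k t ht (fun i => a (t - i)) (phiFun k β.1) q else 0))
    fun p => ?_)
  simp only [compSigmaEquiv, Equiv.coe_fn_mk]
  by_cases hc : PCond k t ht α.1 β.1 p
  · rw [if_pos hc]
    exact (pval_rev ht a α.1 β.1 p hc).symm.trans
      (congrArg (fun x => (fvalN k α.1 : R) * x) (if_pos (pcond_rev ht α.1 β.1 p hc)).symm)
  · rw [if_neg hc]
    exact (zero_mul _).trans ((mul_zero (fvalN k α.1 : R)).symm.trans
      (congrArg (fun x => (fvalN k α.1 : R) * x)
        (if_neg (fun hc' => hc ((pcond_rev_iff ht α.1 β.1 p).mpr hc'))).symm))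

lemma PiMat_map {A B : Type*} [CommRing A] [CommRing B] (g : A →+* B) (k t r : ℕ)
    (a : ℕ → A) : (PiMat k t r a).map g = PiMat k t r (fun n => g (a n)) := by
  ext α β
  simp only [Matrix.map_apply, PiMat, Matrix.of_apply]
  split_ifs with ht
  · rw [map_sum]
    refine Finset.sum_congr rfl fun p _ => ?_
    split_ifs with hc
    · simp only [map_mul, map_pow, map_natCast, map_prod, apply_ite g, map_one]
    · exact map_zero g
  · simp only [map_mul, map_natCast, map_pow]

lemma det_rev {D : Type*} [CommRing D] [IsDomain D] [CharZero D] (k t r : ℕ)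
    (ht : 1 ≤ t) (hr : r ≤ k * t) (a : ℕ → D) :
    ((Polynomial.X : Polynomial D) • (1 : Matrix (GIdx k r t) (GIdx k r t) (Polynomial D)) -
        (PiMat k t r a).map Polynomial.C).det =
      ((Polynomial.X : Polynomial D) •
          (1 : Matrix (GIdx k (k * t - r) t) (GIdx k (k * t - r) t) (Polynomial D)) -
        (PiMat k t (k * t - r) (fun i => a (t - i))).map Polynomial.C).det := by
  have ht0 : 0 < t := ht
  set e := gEquiv (k := k) (r := r) (t := t) hr with he
  set M : Matrix (GIdx k r t) (GIdx k r t) (Polynomial D) :=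
    (Polynomial.X : Polynomial D) • 1 - (PiMat k t r a).map Polynomial.C with hM
  set M' : Matrix (GIdx k (k * t - r) t) (GIdx k (k * t - r) t) (Polynomial D) :=
    (Polynomial.X : Polynomial D) • 1 -
      (PiMat k t (k * t - r) (fun i => a (t - i))).map Polynomial.C with hM'
  set E : Matrix (GIdx k r t) (GIdx k r t) (Polynomial D) :=
    Matrix.diagonal fun γ => ((fvalN k γ.1 : ℕ) : Polynomial D) with hE
  have hcomm : M * E = E * (M'.transpose.submatrix e e) := by
    refine Matrix.ext fun α β => ?_
    rw [hE, Matrix.mul_diagonal, Matrix.diagonal_mul, hM, hM']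
    simp only [Matrix.sub_apply, Matrix.smul_apply, Matrix.one_apply, Matrix.map_apply,
      Matrix.transpose_apply, Matrix.submatrix_apply, smul_eq_mul]
    have hkey := key_entry (R := Polynomial D) ht0 hr (fun n => Polynomial.C (a n)) α β
    have hmap1 : ∀ γ δ : GIdx k r t,
        Polynomial.C (PiMat k t r a γ δ) = PiMat k t r (fun n => Polynomial.C (a n)) γ δ := by
      intro γ δ
      have := congrFun (congrFun (congrArg (fun (m : Matrix _ _ (Polynomial D)) => (m : _ → _ → _))
        (PiMat_map (Polynomial.C : D →+* Polynomial D) k t r a)) γ) δ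
      simpa [Matrix.map_apply] using this
    have hmap2 : ∀ (γ δ : GIdx k (k * t - r) t),
        Polynomial.C (PiMat k t (k * t - r) (fun i => a (t - i)) γ δ)
          = PiMat k t (k * t - r) (fun i => Polynomial.C (a (t - i))) γ δ := by
      intro γ δ
      have := congrFun (congrFun (congrArg (fun (m : Matrix _ _ (Polynomial D)) => (m : _ → _ → _))
        (PiMat_map (Polynomial.C : D →+* Polynomial D) k t (k * t - r) (fun i => a (t - i)))) γ) δ
      simpa [Matrix.map_apply] using this
    rw [hmap1 α β, hmap2 (e β) (e α)]
    beta_reduce at hkey ⊢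
    by_cases hab : α = β
    · subst hab
      rw [if_pos rfl, if_pos rfl]
      linear_combination hkey
    · rw [if_neg hab, if_neg (fun h' => hab (e.injective h'.symm))]
      linear_combination hkey
  have hdet := congrArg Matrix.det hcomm
  rw [Matrix.det_mul, Matrix.det_mul, Matrix.det_submatrix_equiv_self e,
    Matrix.det_transpose] at hdet
  have hEdet : E.det = ((∏ γ : GIdx k r t, fvalN k γ.1 : ℕ) : Polynomial D) := by
    rw [hE, Matrix.det_diagonal, Nat.cast_prod]
  have hEne : E.det ≠ 0 := by
    rw [hEdet]
    have hpos : 0 < ∏ γ : GIdx k r t, fvalN k γ.1 :=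
      Finset.prod_pos fun γ _ => Finset.prod_pos fun i _ =>
        Nat.mul_pos (Nat.factorial_pos _) (Nat.factorial_pos _)
    exact_mod_cast Nat.cast_ne_zero.mpr hpos.ne'
  rw [mul_comm] at hdet
  exact mul_left_cancel₀ hEne hdet

/-! ### Transfer along ring homomorphisms and the main theorem -/

lemma charmat_det_map {A B : Type*} [CommRing A] [CommRing B] (g : A →+* B)
    (k t r : ℕ) (b : ℕ → A) :
    Polynomial.map g
        (((Polynomial.X : Polynomial A) •
            (1 : Matrix (GIdx k r t) (GIdx k r t) (Polynomial A)) -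
          (PiMat k t r b).map Polynomial.C).det)
      = ((Polynomial.X : Polynomial B) •
            (1 : Matrix (GIdx k r t) (GIdx k r t) (Polynomial B)) -
          (PiMat k t r (fun n => g (b n))).map Polynomial.C).det := by
  rw [show Polynomial.map g = ⇑(Polynomial.mapRingHom g) from rfl, RingHom.map_det]
  congr 1
  refine Matrix.ext fun α β => ?_
  simp only [RingHom.mapMatrix_apply, Matrix.map_apply, Matrix.sub_apply, Matrix.smul_apply,
    Matrix.one_apply, Matrix.map_apply, smul_eq_mul, Polynomial.coe_mapRingHom,
    Polynomial.map_sub, Polynomial.map_mul, Polynomial.map_X, Polynomial.map_C]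
  have : (PiMat k t r b).map (g : A →+* B) = PiMat k t r (fun n => g (b n)) :=
    PiMat_map g k t r b
  have h2 : g (PiMat k t r b α β) = PiMat k t r (fun n => g (b n)) α β := by
    rw [← this]; rfl
  rw [h2]
  congr 1
  by_cases hab : α = β <;> simp [hab]


theorem stmt14 {R : Type*} [CommRing R] (k t r : ℕ) (hk : 1 ≤ k) (ht : 1 ≤ t)
    (hr : r ≤ k * t) (a : ℕ → R) :
    ((Polynomial.X : Polynomial R) • (1 : Matrix (GIdx k r t) (GIdx k r t) (Polynomial R)) -
        (PiMat k t r a).map Polynomial.C).det =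
      ((Polynomial.X : Polynomial R) • (1 : Matrix (GIdx k (k * t - r) t) (GIdx k (k * t - r) t) (Polynomial R)) -
        (PiMat k t (k * t - r) (fun i => a (t - i))).map Polynomial.C).det := by
  classical
  let φ : MvPolynomial ℕ ℤ →+* R := (MvPolynomial.aeval a).toRingHom
  have hφX : ∀ n, φ (MvPolynomial.X n) = a n := fun n => MvPolynomial.aeval_X a n
  have h0 := det_rev (D := MvPolynomial ℕ ℤ) k t r ht hr MvPolynomial.X
  have h1 := congrArg (Polynomial.map φ) h0
  rw [charmat_det_map φ k t r MvPolynomial.X,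
    charmat_det_map φ k t (k * t - r) (fun i => MvPolynomial.X (t - i))] at h1
  simpa only [hφX] using h1
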